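/- Let c = pπ/q with 0 < p/q < 1/2, δ₀ = sin c, and m a positive integer with 2(m+1)p/q an even integer. Define g(φ, δ) = sin φ − sin(φ + 2(m+1) arcsin(δ sin φ)). Then g(π/2, δ₀) = 0, ∂g/∂φ(π/2, δ₀) = 0, ∂²g/∂φ²(π/2, δ₀) = 0, and ∂³g/∂φ³(π/2, δ₀) ≠ 0, while ∂²g/(∂φ∂δ)(π/2, δ₀) ≠ 0. -/

import Mathlib

open Real

noncomputable def rr (δ φ : ℝ) : ℝ := Real.sqrt (1 - (δ * Real.sin φ)^2)
noncomputable def FF (A δ φ : ℝ) : ℝ := φ + A * Real.arcsin (δ * Real.sin φ)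
noncomputable def HH (A δ φ : ℝ) : ℝ := 1 + A * (δ * Real.cos φ / rr δ φ)
noncomputable def HH1 (A δ φ : ℝ) : ℝ := A * (δ * Real.sin φ * (δ^2 - 1) / rr δ φ ^ 3)

lemma pos1 (δ φ : ℝ) (hδ : δ^2 < 1) : 0 < 1 - (δ * Real.sin φ)^2 := by
  have h1 : (δ * Real.sin φ)^2 = δ^2 * (Real.sin φ)^2 := by ring
  nlinarith [Real.sin_sq_le_one φ, sq_nonneg δ, sq_nonneg (Real.sin φ)]

lemma rr_pos (δ φ : ℝ) (hδ : δ^2 < 1) : 0 < rr δ φ := Real.sqrt_pos.2 (pos1 δ φ hδ)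

lemma rr_sq (δ φ : ℝ) (hδ : δ^2 < 1) : rr δ φ ^ 2 = 1 - (δ * Real.sin φ)^2 :=
  Real.sq_sqrt (pos1 δ φ hδ).le

lemma ne_neg_one (δ φ : ℝ) (hδ : δ^2 < 1) : δ * Real.sin φ ≠ -1 := by
  intro h
  have := pos1 δ φ hδ
  rw [h] at this; norm_num at this

lemma ne_one (δ φ : ℝ) (hδ : δ^2 < 1) : δ * Real.sin φ ≠ 1 := by
  intro h
  have := pos1 δ φ hδ
  rw [h] at this; norm_num at this

lemma hasDerivAt_u (δ φ : ℝ) : HasDerivAt (fun φ => δ * Real.sin φ) (δ * Real.cos φ) φ :=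
  (Real.hasDerivAt_sin φ).const_mul δ

lemma hasDerivAt_arc (δ φ : ℝ) (hδ : δ^2 < 1) :
    HasDerivAt (fun φ => Real.arcsin (δ * Real.sin φ)) (δ * Real.cos φ / rr δ φ) φ := by
  have h := (Real.hasDerivAt_arcsin (ne_neg_one δ φ hδ) (ne_one δ φ hδ)).comp φ (hasDerivAt_u δ φ)
  refine h.congr_deriv ?_
  rw [rr]; field_simp

lemma hasDerivAt_rr (δ φ : ℝ) (hδ : δ^2 < 1) :
    HasDerivAt (rr δ) (-(δ^2 * Real.sin φ * Real.cos φ) / rr δ φ) φ := by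
  have hinner : HasDerivAt (fun φ => 1 - (δ * Real.sin φ)^2)
      (-(2 * (δ * Real.sin φ) * (δ * Real.cos φ))) φ := by
    have := ((hasDerivAt_u δ φ).pow 2).const_sub 1
    refine this.congr_deriv ?_; push_cast; ring
  have h := (Real.hasDerivAt_sqrt (pos1 δ φ hδ).ne').comp φ hinner
  have hr := rr_pos δ φ hδ
  refine h.congr_deriv ?_
  rw [show Real.sqrt (1 - (δ * Real.sin φ)^2) = rr δ φ from rfl]
  field_simp

lemma hasDerivAt_FF (A δ φ : ℝ) (hδ : δ^2 < 1) :
    HasDerivAt (FF A δ) (HH A δ φ) φ := by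
  have := (hasDerivAt_id φ).add ((hasDerivAt_arc δ φ hδ).const_mul A)
  refine this.congr_deriv ?_; rfl

lemma hasDerivAt_HH (A δ φ : ℝ) (hδ : δ^2 < 1) :
    HasDerivAt (HH A δ) (HH1 A δ φ) φ := by
  have hr := rr_pos δ φ hδ
  have hnum : HasDerivAt (fun φ => δ * Real.cos φ) (δ * -Real.sin φ) φ :=
    (Real.hasDerivAt_cos φ).const_mul δ
  have hq := hnum.div (hasDerivAt_rr δ φ hδ) hr.ne'
  have h := ((hq.const_mul A).const_add 1)
  refine h.congr_deriv ?_
  rw [HH1]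
  have h2 := rr_sq δ φ hδ
  field_simp
  linear_combination (-(A * δ * Real.sin φ)) * h2 +
    (A * δ^3 * Real.sin φ) * (Real.sin_sq_add_cos_sq φ)

lemma hasDerivAt_g (A δ φ : ℝ) (hδ : δ^2 < 1) :
    HasDerivAt (fun φ => Real.sin φ - Real.sin (FF A δ φ))
      (Real.cos φ - Real.cos (FF A δ φ) * HH A δ φ) φ := by
  exact (Real.hasDerivAt_sin φ).sub
    (((Real.hasDerivAt_sin _).comp φ (hasDerivAt_FF A δ φ hδ)))

noncomputable def GG1 (A δ φ : ℝ) : ℝ := Real.cos φ - Real.cos (FF A δ φ) * HH A δ φ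
noncomputable def GG2 (A δ φ : ℝ) : ℝ :=
  -Real.sin φ + Real.sin (FF A δ φ) * HH A δ φ * HH A δ φ - Real.cos (FF A δ φ) * HH1 A δ φ
noncomputable def DD (A δ φ : ℝ) : ℝ :=
  A * ((δ * Real.cos φ * (δ^2-1) * rr δ φ ^3 - δ * Real.sin φ * (δ^2-1) *
    (3 * rr δ φ^2 * (-(δ^2 * Real.sin φ * Real.cos φ) / rr δ φ))) / (rr δ φ^3)^2)
noncomputable def GG3 (A δ φ : ℝ) : ℝ :=
  -Real.cos φ + Real.cos (FF A δ φ) * HH A δ φ^3 +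
    3 * Real.sin (FF A δ φ) * HH A δ φ * HH1 A δ φ - Real.cos (FF A δ φ) * DD A δ φ

lemma hasDerivAt_GG1 (A δ φ : ℝ) (hδ : δ^2 < 1) :
    HasDerivAt (GG1 A δ) (GG2 A δ φ) φ := by
  have h := (Real.hasDerivAt_cos φ).sub
    (((Real.hasDerivAt_cos _).comp φ (hasDerivAt_FF A δ φ hδ)).mul (hasDerivAt_HH A δ φ hδ))
  refine h.congr_deriv ?_
  simp only [GG2, Function.comp]; ring

lemma hasDerivAt_HH1 (A δ φ : ℝ) (hδ : δ^2 < 1) :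
    HasDerivAt (HH1 A δ) (DD A δ φ) φ := by
  have hr := rr_pos δ φ hδ
  have hnum : HasDerivAt (fun φ => δ * Real.sin φ * (δ^2 - 1))
      (δ * Real.cos φ * (δ^2 - 1)) φ :=
    ((Real.hasDerivAt_sin φ).const_mul δ).mul_const (δ^2 - 1)
  have hden : HasDerivAt (fun φ => rr δ φ ^ 3)
      ((3:ℕ) * rr δ φ ^ (3-1) * (-(δ^2 * Real.sin φ * Real.cos φ) / rr δ φ)) φ :=
    (hasDerivAt_rr δ φ hδ).pow 3
  have h := (hnum.div hden (by positivity)).const_mul A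
  refine h.congr_deriv ?_
  rw [DD]; norm_num

lemma hasDerivAt_GG2 (A δ φ : ℝ) (hδ : δ^2 < 1) :
    HasDerivAt (GG2 A δ) (GG3 A δ φ) φ := by
  have hFF := hasDerivAt_FF A δ φ hδ
  have hHH := hasDerivAt_HH A δ φ hδ
  have h := (((Real.hasDerivAt_sin φ).neg).add
    (((((Real.hasDerivAt_sin _).comp φ hFF).mul hHH).mul hHH).sub
    (((Real.hasDerivAt_cos _).comp φ hFF).mul (hasDerivAt_HH1 A δ φ hδ))))
  have heq : GG2 A δ = fun x => -Real.sin x +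
      ((Real.sin ∘ FF A δ) x * HH A δ x * HH A δ x - (Real.cos ∘ FF A δ) x * HH1 A δ x) := by
    funext x; simp only [GG2, Function.comp]; ring
  rw [heq]
  refine h.congr_deriv ?_
  simp only [GG3, Function.comp, Pi.mul_apply]; ring

theorem stmt3 (p q m : ℕ) (hp : 0 < p) (hpq : 2 * p < q) (hm : 0 < m)
    (hint : ∃ k : ℕ, 2 * (m + 1) * p = k * q ∧ Even k) :
    let c : ℝ := p * π / q
    let δ₀ : ℝ := Real.sin c
    let g : ℝ → ℝ → ℝ := fun φ δ =>
      Real.sin φ - Real.sin (φ + 2 * (m + 1) * Real.arcsin (δ * Real.sin φ))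
    g (π / 2) δ₀ = 0 ∧
      deriv (fun φ => g φ δ₀) (π / 2) = 0 ∧
      iteratedDeriv 2 (fun φ => g φ δ₀) (π / 2) = 0 ∧
      iteratedDeriv 3 (fun φ => g φ δ₀) (π / 2) ≠ 0 ∧
      deriv (fun δ => deriv (fun φ => g φ δ) (π / 2)) δ₀ ≠ 0 := by
  intro c δ₀ g
  obtain ⟨k, hk, j, hj⟩ := hint
  set A : ℝ := 2 * ((m:ℝ) + 1) with hAdef
  have hq : 0 < q := by omega
  have hπ := Real.pi_pos
  have hp' : (0:ℝ) < p := by exact_mod_cast hp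
  have hq' : (0:ℝ) < q := by exact_mod_cast hq
  have hpq' : 2 * (p:ℝ) < q := by exact_mod_cast hpq
  have hc0 : 0 < c := by positivity
  have hc2 : c < π / 2 := by
    rw [div_lt_div_iff₀ hq' (by norm_num : (0:ℝ) < 2)]
    nlinarith
  have hδpos : 0 < δ₀ := Real.sin_pos_of_pos_of_lt_pi hc0 (by linarith)
  have hδlt : δ₀ < 1 := by
    have h1 : Real.sin c < Real.sin (π/2) :=
      Real.strictMonoOn_sin ⟨by linarith, by linarith⟩ ⟨by linarith, le_refl _⟩ hc2
    simpa [Real.sin_pi_div_two] using h1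
  have hδsq : δ₀ ^ 2 < 1 := by nlinarith
  have harc : Real.arcsin δ₀ = c := Real.arcsin_sin (by linarith) (by linarith)
  have hApos : 0 < A := by positivity
  have hAc : A * c = (j:ℝ) * (2 * π) := by
    have hcast : A * (p:ℝ) = ((j:ℝ) + (j:ℝ)) * (q:ℝ) := by
      rw [hAdef]
      have : ((2 * (m + 1) * p : ℕ) : ℝ) = (((j + j) * q : ℕ) : ℝ) := by
        rw [hk, hj]
      push_cast at this
      linarith
    show A * ((p:ℝ) * π / q) = (j:ℝ) * (2 * π)
    field_simp
    linear_combination hcast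
  have hFFval : FF A δ₀ (π/2) = π/2 + (j:ℝ) * (2 * π) := by
    simp only [FF, Real.sin_pi_div_two, mul_one, harc, hAc]
  have hsinF : Real.sin (FF A δ₀ (π/2)) = 1 := by
    rw [hFFval]
    have := Real.sin_add_int_mul_two_pi (π/2) (j:ℤ)
    push_cast at this
    rw [this, Real.sin_pi_div_two]
  have hcosF : Real.cos (FF A δ₀ (π/2)) = 0 := by
    rw [hFFval]
    have := Real.cos_add_int_mul_two_pi (π/2) (j:ℤ)
    push_cast at this
    rw [this, Real.cos_pi_div_two]
  have hHval : HH A δ₀ (π/2) = 1 := by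
    simp [HH, Real.cos_pi_div_two]
  have hgeq : (fun φ => g φ δ₀) = (fun φ => Real.sin φ - Real.sin (FF A δ₀ φ)) := rfl
  have hd1 : deriv (fun φ => Real.sin φ - Real.sin (FF A δ₀ φ)) = GG1 A δ₀ :=
    funext fun x => (hasDerivAt_g A δ₀ x hδsq).deriv
  have hd2 : deriv (GG1 A δ₀) = GG2 A δ₀ :=
    funext fun x => (hasDerivAt_GG1 A δ₀ x hδsq).deriv
  have hrpos := rr_pos δ₀ (π/2) hδsq
  refine ⟨?_, ?_, ?_, ?_, ?_⟩
  · show Real.sin (π/2) - Real.sin (FF A δ₀ (π/2)) = 0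
    rw [hsinF, Real.sin_pi_div_two]; ring
  · rw [hgeq, hd1]
    simp [GG1, hcosF, Real.cos_pi_div_two]
  · rw [hgeq, iteratedDeriv_succ, iteratedDeriv_one, hd1, hd2]
    simp [GG2, hsinF, hcosF, hHval, Real.sin_pi_div_two]
  · rw [hgeq, iteratedDeriv_succ, iteratedDeriv_succ, iteratedDeriv_one, hd1, hd2,
      (hasDerivAt_GG2 A δ₀ (π/2) hδsq).deriv]
    have : GG3 A δ₀ (π/2) = 3 * HH1 A δ₀ (π/2) := by
      simp [GG3, hsinF, hcosF, hHval, Real.cos_pi_div_two]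
    rw [this]
    have hH1neg : HH1 A δ₀ (π/2) < 0 := by
      simp only [HH1, Real.sin_pi_div_two, mul_one]
      apply mul_neg_of_pos_of_neg hApos
      apply div_neg_of_neg_of_pos
      · nlinarith
      · positivity
    intro hcon
    nlinarith
  · have hev : (fun δ => deriv (fun φ => g φ δ) (π/2)) =ᶠ[nhds δ₀]
        (fun δ => -Real.cos (π/2 + A * Real.arcsin δ)) := by
      filter_upwards [Ioo_mem_nhds (by linarith : (-1:ℝ) < δ₀) hδlt] with δ hδmem
      have hδ2 : δ ^ 2 < 1 := by
        obtain ⟨h1, h2⟩ := hδmem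
        nlinarith
      have : (fun φ => g φ δ) = (fun φ => Real.sin φ - Real.sin (FF A δ φ)) := rfl
      rw [this, (hasDerivAt_g A δ (π/2) hδ2).deriv]
      simp [FF, HH, Real.cos_pi_div_two, Real.sin_pi_div_two]
    rw [hev.deriv_eq]
    have hne1 : δ₀ ≠ -1 := by linarith
    have hne2 : δ₀ ≠ 1 := by linarith
    have hψ : HasDerivAt (fun δ => -Real.cos (π/2 + A * Real.arcsin δ))
        (Real.sin (π/2 + A * Real.arcsin δ₀) * (A * (1 / Real.sqrt (1 - δ₀ ^ 2)))) δ₀ := by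
      have hin : HasDerivAt (fun δ => π/2 + A * Real.arcsin δ)
          (A * (1 / Real.sqrt (1 - δ₀ ^ 2))) δ₀ :=
        ((Real.hasDerivAt_arcsin hne1 hne2).const_mul A).const_add (π/2)
      have := ((Real.hasDerivAt_cos _).comp δ₀ hin).neg
      refine this.congr_deriv ?_
      simp [Function.comp]
    rw [hψ.deriv]
    have hsval : Real.sin (π/2 + A * Real.arcsin δ₀) = 1 := by
      rw [harc, hAc]
      have := Real.sin_add_int_mul_two_pi (π/2) (j:ℤ)
      push_cast at this
      rw [this, Real.sin_pi_div_two]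
    rw [hsval]
    have hsq : 0 < Real.sqrt (1 - δ₀ ^ 2) := Real.sqrt_pos.2 (by linarith [hδsq])
    positivity
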